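/- Let t_s ∈ [0,1], let A, B, v be real constants, and let g : [t_s, 1] → ℝ be differentiable with g(t_s) ≥ v and g'(t) ≥ e^{t_s − t}·A − (e^{t_s − t} − e^{-t})·B − g(t) for all t ∈ [t_s, 1]. Then for all t ∈ [t_s, 1], g(t) ≥ e^{-t}·[(t − t_s)·(e^{t_s}·A − (e^{t_s} − 1)·B) + v·e^{t_s}]. -/

import Mathlib

theorem stmt_13 (ts : ℝ) (hts : ts ∈ Set.Icc (0:ℝ) 1) (A B v : ℝ) (g g' : ℝ → ℝ)
    (hderiv : ∀ t ∈ Set.Icc ts 1, HasDerivAt g (g' t) t)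
    (hv : g ts ≥ v)
    (hineq : ∀ t ∈ Set.Icc ts 1,
      g' t ≥ Real.exp (ts - t) * A - (Real.exp (ts - t) - Real.exp (-t)) * B - g t) :
    ∀ t ∈ Set.Icc ts 1,
      g t ≥ Real.exp (-t) *
        ((t - ts) * (Real.exp ts * A - (Real.exp ts - 1) * B) + v * Real.exp ts) := by
  set C : ℝ := Real.exp ts * A - (Real.exp ts - 1) * B with hC
  set h : ℝ → ℝ := fun t => Real.exp t * g t - ((t - ts) * C + v * Real.exp ts) with hh
  have hderivh : ∀ t ∈ Set.Icc ts 1,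
      HasDerivAt h (Real.exp t * g t + Real.exp t * g' t - C) t := by
    intro t ht
    have h1 : HasDerivAt (fun t => Real.exp t * g t)
        (Real.exp t * g t + Real.exp t * g' t) t :=
      (Real.hasDerivAt_exp t).mul (hderiv t ht)
    have h2 : HasDerivAt (fun t => (t - ts) * C + v * Real.exp ts) C t := by
      simpa using (((hasDerivAt_id t).sub_const ts).mul_const C).add_const (v * Real.exp ts)
    exact h1.sub h2
  have hmono : MonotoneOn h (Set.Icc ts 1) := by
    apply monotoneOn_of_deriv_nonneg (convex_Icc ts 1)
    · exact fun t ht => ((hderivh t ht).continuousAt).continuousWithinAt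
    · intro t ht
      rw [interior_Icc] at ht
      exact ((hderivh t (Set.mem_Icc_of_Ioo ht)).differentiableAt).differentiableWithinAt
    · intro t ht
      rw [interior_Icc] at ht
      have ht' : t ∈ Set.Icc ts 1 := Set.mem_Icc_of_Ioo ht
      rw [(hderivh t ht').deriv]
      have h3 := hineq t ht'
      have hep : (0:ℝ) < Real.exp t := Real.exp_pos t
      have h4 : Real.exp t * (Real.exp (ts - t) * A - (Real.exp (ts - t) - Real.exp (-t)) * B - g t)
          ≤ Real.exp t * g' t := by
        exact mul_le_mul_of_nonneg_left h3 hep.le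
      have h5 : Real.exp t * Real.exp (ts - t) = Real.exp ts := by
        rw [← Real.exp_add]; ring_nf
      have h6 : Real.exp t * Real.exp (-t) = 1 := by
        rw [← Real.exp_add]; simp
      have key : Real.exp t * (Real.exp (ts - t) * A - (Real.exp (ts - t) - Real.exp (-t)) * B - g t)
          = Real.exp ts * A - (Real.exp ts - 1) * B - Real.exp t * g t := by
        linear_combination (A - B) * h5 + B * h6
      rw [key] at h4
      simp only [hC]
      linarith
  intro t ht
  have hts1 : ts ∈ Set.Icc ts 1 := Set.left_mem_Icc.mpr (le_trans ht.1 ht.2)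
  have h0 : h ts ≤ h t := hmono hts1 ht ht.1
  have hts0 : h ts = Real.exp ts * g ts - v * Real.exp ts := by simp [hh]
  have h7 : (t - ts) * C + v * Real.exp ts ≤ Real.exp t * g t := by
    have : 0 ≤ h ts := by
      rw [hts0]; nlinarith [Real.exp_pos ts, hv]
    have := le_trans this h0
    simp only [hh] at this
    linarith
  rw [ge_iff_le, Real.exp_neg, inv_mul_le_iff₀ (Real.exp_pos t)]
  exact h7
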